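/- Let x ∈ L be such that the evaluation map H₂ → L given by h ↦ h • x is bijective, and let 𝔅 ⊆ L be a subset satisfying 𝔅 = {a • x : a ∈ 𝔄₁(𝔅)}. Let 𝔐 be a subring of H₁ containing 𝔄₁(𝔅), and set Δ = {μ • x : μ ∈ 𝔐}. If Δ ≠ 𝔅, then 𝔄₂(𝔅) is properly contained in 𝔄₂(Δ). (Key step in the proof of Proposition 4.2: enlarging the order on the H₁-side strictly enlarges the associated order on the H₂-side, so the associated orders in H and H' are simultaneously maximal.) -/

import Mathlib

/-- Key step in the proof of Proposition 4.2: with commuting module structures of `H₁`, `H₂`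
on `L`, suppose `x` is a free generator (the evaluation `H₂ → L` is bijective) and `𝔅` is
freely generated by `x` over its associated order `𝔄₁(𝔅)` in `H₁`. If `𝔐` is a subring of
`H₁` containing `𝔄₁(𝔅)` and `Δ = 𝔐 • x ≠ 𝔅`, then the associated order of `𝔅` in `H₂` is
properly contained in the associated order of `Δ` in `H₂`. -/
theorem enlarging_order_enlarges_associated_order
    {H₁ H₂ L : Type*} [Ring H₁] [Ring H₂] [AddCommGroup L]
    [Module H₁ L] [Module H₂ L]
    (hcomm : ∀ (h₁ : H₁) (h₂ : H₂) (l : L), h₁ • (h₂ • l) = h₂ • (h₁ • l))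
    (x : L) (hx : Function.Bijective (fun h : H₂ => h • x))
    (𝔅 : Set L)
    (h𝔅 : 𝔅 = (fun a : H₁ => a • x) '' {a : H₁ | ∀ b ∈ 𝔅, a • b ∈ 𝔅})
    (𝔐 : Subring H₁)
    (h𝔐 : {a : H₁ | ∀ b ∈ 𝔅, a • b ∈ 𝔅} ⊆ (𝔐 : Set H₁))
    (hΔ : (fun μ : H₁ => μ • x) '' (𝔐 : Set H₁) ≠ 𝔅) :
    {z : H₂ | ∀ b ∈ 𝔅, z • b ∈ 𝔅} ⊂
      {z : H₂ | ∀ d ∈ (fun μ : H₁ => μ • x) '' (𝔐 : Set H₁),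
        z • d ∈ (fun μ : H₁ => μ • x) '' (𝔐 : Set H₁)} := by
  have hx1 : x ∈ 𝔅 := by
    rw [h𝔅]
    exact ⟨1, fun b hb => by simpa using hb, one_smul _ _⟩
  have h𝔅Δ : 𝔅 ⊆ (fun μ : H₁ => μ • x) '' (𝔐 : Set H₁) := by
    rw [h𝔅]; exact Set.image_mono h𝔐
  constructor
  · intro z hz d hd
    obtain ⟨μ, hμ, rfl⟩ := hd
    have hmem : z • x ∈ 𝔅 := hz x hx1
    rw [h𝔅] at hmem
    obtain ⟨a, ha, hax⟩ := hmem
    refine ⟨μ * a, mul_mem hμ (h𝔐 ha), ?_⟩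
    show (μ * a) • x = z • (μ • x)
    have hax' : a • x = z • x := hax
    rw [mul_smul, hax']
    exact hcomm μ z x
  · intro hcontra
    have hne : ∃ d ∈ (fun μ : H₁ => μ • x) '' (𝔐 : Set H₁), d ∉ 𝔅 := by
      by_contra h
      push_neg at h
      exact hΔ (Set.Subset.antisymm h h𝔅Δ)
    obtain ⟨d, ⟨μ, hμ, rfl⟩, hd𝔅⟩ := hne
    obtain ⟨z, hz⟩ := hx.2 (μ • x)
    have hzΔ : ∀ d' ∈ (fun μ : H₁ => μ • x) '' (𝔐 : Set H₁),
        z • d' ∈ (fun μ : H₁ => μ • x) '' (𝔐 : Set H₁) := by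
      rintro d' ⟨ν, hν, rfl⟩
      refine ⟨ν * μ, mul_mem hν hμ, ?_⟩
      show (ν * μ) • x = z • (ν • x)
      have hz' : z • x = μ • x := hz
      rw [mul_smul, ← hz']
      exact hcomm ν z x
    have : z • x ∈ 𝔅 := hcontra hzΔ x hx1
    have hz' : z • x = μ • x := hz
    rw [hz'] at this
    exact hd𝔅 this
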